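/- Let F be a positive CNF formula with k ≥ 1 variables and n ≥ 1 clauses (each clause a nonempty subset of the variables). Then every connected dominating set S of G_F contains at least three vertices from each gadget B_i, i ∈ [k]. -/

import Mathlib

namespace CDG

/-- Vertices of the graph `B`. -/
inductive BVert : Type
  | a | e | b | b' | h | k | f1 | g1 | f2 | g2

/-- The edges of the graph `B`. -/
def BRel : BVert → BVert → Prop
  | .a, .e => True
  | .e, .b => True
  | .b, .b' => True
  | .a, .h => True
  | .h, .e => True
  | .e, .f1 => True
  | .f1, .b => True
  | .b, .f2 => True
  | .f2, .e => True
  | .e, .g1 => True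
  | .g1, .f1 => True
  | .e, .g2 => True
  | .g2, .f2 => True
  | .h, .k => True
  | .k, .a => True
  | _, _ => False

/-- The graph `B`. -/
def graphB : SimpleGraph BVert := SimpleGraph.fromRel BRel

/-- `S` is a connected dominating set of `G`: every vertex is in `S` or adjacent to a
vertex of `S`, and the subgraph induced by `S` is connected. -/
def IsConnDomSet {V : Type*} (G : SimpleGraph V) (S : Set V) : Prop :=
  (∀ v : V, v ∈ S ∨ ∃ u ∈ S, G.Adj u v) ∧ (G.induce S).Connected

/-- The connected domination number of `G`. -/
noncomputable def connDomNum {V : Type*} (G : SimpleGraph V) : ℕ :=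
  sInf {m | ∃ S : Set V, IsConnDomSet G S ∧ S.ncard = m}

/-- Vertices of the graph `H n`: `u i` is `u_i` for `0 ≤ i ≤ n+1`, `x t` is `x_{t+1}` and
`y t` is `y_{t+1}` for `0 ≤ t ≤ n-2`. -/
inductive HVert (n : ℕ) : Type
  | u : Fin (n + 2) → HVert n
  | x : Fin (n - 1) → HVert n
  | y : Fin (n - 1) → HVert n

/-- The edges of the graph `H n`. -/
def HRel (n : ℕ) : HVert n → HVert n → Prop
  | .u i, .u j => (j : ℕ) = (i : ℕ) + 1
  | .u i, .x t => (i : ℕ) = (t : ℕ) + 1 ∨ (i : ℕ) = (t : ℕ) + 2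
  | .x t, .y s => t = s
  | .y s, .u i => (i : ℕ) = (s : ℕ) + 2
  | _, _ => False

/-- The graph `H n`. -/
def graphH (n : ℕ) : SimpleGraph (HVert n) := SimpleGraph.fromRel (HRel n)

/-- Vertices of the graph `C m`: `cc i` is `c^{i+1}` and `dd i` is `d^{i+1}` for `0 ≤ i ≤ m-1`. -/
inductive CVert (m : ℕ) : Type
  | c : CVert m
  | d : CVert m
  | cc : Fin m → CVert m
  | dd : Fin m → CVert m

/-- The edges of the graph `C m`. -/
def CRel (m : ℕ) : CVert m → CVert m → Prop
  | .c, .d => True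
  | .c, .dd _ => True
  | .cc i, .dd j => i = j
  | _, _ => False

/-- The graph `C m`. -/
def graphC (m : ℕ) : SimpleGraph (CVert m) := SimpleGraph.fromRel (CRel m)

/-- Vertices of the graph `A`. -/
inductive AVert : Type
  | p1 | p2 | p3 | q1 | q2 | r1 | r2

/-- The edges of the graph `A`. -/
def ARel : AVert → AVert → Prop
  | .p1, .p2 => True
  | .p2, .p3 => True
  | .p1, .q1 => True
  | .q1, .r1 => True
  | .p2, .q1 => True
  | .p2, .r1 => True
  | .p2, .q2 => True
  | .q2, .r2 => True
  | .p3, .q2 => True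
  | .p3, .r2 => True
  | _, _ => False

/-- Vertices of the graph `G_F`, for a formula with `k` variables and `n` clauses:
`k` copies of `B`, `n` copies of `C n`, one copy of `H (2n+7)`, and a copy of `A`
exactly when `k` is odd (realized as `AVert × Fin (k % 2)`). -/
abbrev GVert (k n : ℕ) : Type :=
  (Fin k × BVert) ⊕ (Fin n × CVert n) ⊕ HVert (2 * n + 7) ⊕ (AVert × Fin (k % 2))

/-- The edges of the graph `G_F`, where the formula `F` assigns to each clause `j`
the (nonempty) set of variables appearing in it. -/
def GRel (k n : ℕ) (F : Fin n → Finset (Fin k)) : GVert k n → GVert k n → Prop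
  | .inl (i, v), .inl (i', w) => i = i' ∧ BRel v w
  | .inr (.inl (j, v)), .inr (.inl (j', w)) => j = j' ∧ CRel n v w
  | .inr (.inr (.inl v)), .inr (.inr (.inl w)) => HRel (2 * n + 7) v w
  | .inr (.inr (.inr (v, _))), .inr (.inr (.inr (w, _))) => ARel v w
  | .inr (.inl (j, v)), .inl (i, w) =>
      i ∈ F j ∧ w = .a ∧ (v = .c ∨ ∃ t, v = .cc t)
  | .inr (.inr (.inl v)), .inl (i, w) =>
      v = .u ⟨0, by omega⟩ ∧ (w = .a ∨ w = .b)
  | .inr (.inr (.inr (v, _))), .inr (.inr (.inl w)) =>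
      v = .p1 ∧ w = .u ⟨0, by omega⟩
  | _, _ => False

/-- The graph `G_F`. -/
def graphGF (k n : ℕ) (F : Fin n → Finset (Fin k)) : SimpleGraph (GVert k n) :=
  SimpleGraph.fromRel (GRel k n F)

/-- Vertices of the graph `G'_F`, for a formula with `k` variables and `n` clauses:
`k` copies of `B`, `n` copies of `C n`, one copy of `H 6`, and a copy of `A`
exactly when `k` is odd (realized as `AVert × Fin (k % 2)`). -/
abbrev GVert' (k n : ℕ) : Type :=
  (Fin k × BVert) ⊕ (Fin n × CVert n) ⊕ HVert 6 ⊕ (AVert × Fin (k % 2))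

/-- The edges of the graph `G'_F`. -/
def GRel' (k n : ℕ) (F : Fin n → Finset (Fin k)) : GVert' k n → GVert' k n → Prop
  | .inl (i, v), .inl (i', w) => i = i' ∧ BRel v w
  | .inr (.inl (j, v)), .inr (.inl (j', w)) => j = j' ∧ CRel n v w
  | .inr (.inr (.inl v)), .inr (.inr (.inl w)) => HRel 6 v w
  | .inr (.inr (.inr (v, _))), .inr (.inr (.inr (w, _))) => ARel v w
  | .inr (.inl (j, v)), .inl (i, w) =>
      i ∈ F j ∧ w = .a ∧ (v = .c ∨ ∃ t, v = .cc t)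
  | .inr (.inr (.inl v)), .inl (i, w) =>
      v = .u ⟨7, by omega⟩ ∧ (w = .a ∨ w = .b)
  | .inr (.inr (.inr (v, _))), .inr (.inr (.inl w)) =>
      v = .p1 ∧ w = .u ⟨7, by omega⟩
  | _, _ => False

/-- The graph `G'_F`. -/
def graphGF' (k n : ℕ) (F : Fin n → Finset (Fin k)) : SimpleGraph (GVert' k n) :=
  SimpleGraph.fromRel (GRel' k n F)

deriving instance DecidableEq for BVert

instance : Fintype BVert :=
  ⟨{.a, .e, .b, .b', .h, .k, .f1, .g1, .f2, .g2}, fun x => by cases x <;> decide⟩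

instance : DecidableRel BRel := fun a b => by
  cases a <;> cases b <;> simp only [BRel] <;>
    first | exact instDecidableTrue | exact instDecidableFalse

lemma three_le_ncard_of_three {α : Type*} {T : Set α} (hT : T.Finite) {x y z : α}
    (hx : x ∈ T) (hy : y ∈ T) (hz : z ∈ T) (hxy : x ≠ y) (hxz : x ≠ z) (hyz : y ≠ z) :
    3 ≤ T.ncard := by
  have h1 : ({x, y, z} : Set α).ncard = 3 := by
    rw [Set.ncard_insert_of_notMem (by simp [hxy, hxz]),
      Set.ncard_insert_of_notMem (by simp [hyz]), Set.ncard_singleton]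
  calc 3 = ({x, y, z} : Set α).ncard := h1.symm
    _ ≤ T.ncard := Set.ncard_le_ncard (by
        intro v hv
        rcases hv with rfl | rfl | rfl <;> assumption) hT

lemma dom_B {k n : ℕ} {F : Fin n → Finset (Fin k)} {S : Set (GVert k n)}
    (hS : IsConnDomSet (graphGF k n F) S) (i : Fin k) (w0 : BVert)
    (h1 : w0 ≠ .a) (h2 : w0 ≠ .b) :
    ∃ w : BVert, (Sum.inl (i, w) : GVert k n) ∈ S ∧
      (w = w0 ∨ BRel w w0 ∨ BRel w0 w) := by
  rcases hS.1 (.inl (i, w0)) with h | ⟨u, hu, hadj⟩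
  · exact ⟨w0, h, Or.inl rfl⟩
  · rw [graphGF, SimpleGraph.fromRel_adj] at hadj
    obtain ⟨hne, hrel⟩ := hadj
    rcases u with ⟨i', w⟩ | ⟨⟨j, v⟩ | ⟨v | ⟨v, t⟩⟩⟩
    · simp only [GRel] at hrel
      rcases hrel with ⟨hi, hb⟩ | ⟨hi, hb⟩
      · subst hi; exact ⟨w, hu, Or.inr (Or.inl hb)⟩
      · subst hi; exact ⟨w, hu, Or.inr (Or.inr hb)⟩
    · simp only [GRel] at hrel
      rcases hrel with ⟨_, hb, _⟩ | h
      · exact absurd hb h1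
      · exact absurd h (by simp)
    · simp only [GRel] at hrel
      rcases hrel with ⟨_, hb | hb⟩ | h
      · exact absurd hb h1
      · exact absurd hb h2
      · exact absurd h (by simp)
    · simp only [GRel] at hrel
      rcases hrel with h | h <;> exact absurd h (by simp)

theorem connDomSet_three_in_each_B (k n : ℕ) (hk : 1 ≤ k) (hn : 1 ≤ n)
    (F : Fin n → Finset (Fin k)) (hF : ∀ j, (F j).Nonempty)
    (S : Set (GVert k n)) (hS : IsConnDomSet (graphGF k n F) S) (i : Fin k) :
    3 ≤ (S ∩ {v : GVert k n | ∃ w : BVert, v = .inl (i, w)}).ncard := by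
  obtain ⟨w1, hw1S, hw1⟩ := dom_B hS i .b' (by decide) (by decide)
  obtain ⟨w2, hw2S, hw2⟩ := dom_B hS i .k (by decide) (by decide)
  obtain ⟨w3, hw3S, hw3⟩ := dom_B hS i .g1 (by decide) (by decide)
  obtain ⟨w4, hw4S, hw4⟩ := dom_B hS i .g2 (by decide) (by decide)
  have hw1' : w1 = .b ∨ w1 = .b' := by cases w1 <;> revert hw1 <;> decide
  have hw2' : w2 = .k ∨ w2 = .h ∨ w2 = .a := by cases w2 <;> revert hw2 <;> decide
  have hw3' : w3 = .g1 ∨ w3 = .e ∨ w3 = .f1 := by cases w3 <;> revert hw3 <;> decide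
  have hw4' : w4 = .g2 ∨ w4 = .e ∨ w4 = .f2 := by cases w4 <;> revert hw4 <;> decide
  set T : Set (GVert k n) := S ∩ {v : GVert k n | ∃ w : BVert, v = .inl (i, w)} with hT
  have hTfin : T.Finite := by
    apply Set.Finite.subset (Set.finite_range (fun w : BVert => (Sum.inl (i, w) : GVert k n)))
    rintro v ⟨-, w, rfl⟩
    exact ⟨w, rfl⟩
  have hmem : ∀ w : BVert, (Sum.inl (i, w) : GVert k n) ∈ S →
      (Sum.inl (i, w) : GVert k n) ∈ T := fun w hw => ⟨hw, w, rfl⟩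
  have hinj : ∀ w w' : BVert, w ≠ w' →
      (Sum.inl (i, w) : GVert k n) ≠ Sum.inl (i, w') := by
    intro w w' hww h
    exact hww (by injection h with h'; exact congrArg Prod.snd h')
  by_cases h34 : w3 = w4
  · have he : w3 = .e := by
      rcases hw3' with rfl | rfl | rfl <;> rcases hw4' with h | h | h <;>
        first | rfl | exact absurd (h34.trans h) (by decide) |
          exact absurd h34 (by rw [h]; decide)
    subst he
    refine three_le_ncard_of_three hTfin (hmem _ hw1S) (hmem _ hw2S) (hmem _ hw3S)
      (hinj _ _ ?_) (hinj _ _ ?_) (hinj _ _ ?_) <;>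
      rcases hw1' with rfl | rfl <;> rcases hw2' with rfl | rfl | rfl <;> decide
  · refine three_le_ncard_of_three hTfin (hmem _ hw1S) (hmem _ hw3S) (hmem _ hw4S)
      (hinj _ _ ?_) (hinj _ _ ?_) (hinj _ _ h34) <;>
      rcases hw1' with rfl | rfl <;> rcases hw3' with rfl | rfl | rfl <;>
        rcases hw4' with rfl | rfl | rfl <;> first | decide | exact absurd rfl h34

end CDG
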